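/- For the multidimensional Klebsh–Tisserand system with potential V(Γ) = (1/2)Σ_{i=1}^n B_i Γ_i², the functions F_i(Ω,Γ) = (B_i − B_n)Γ_i² + (I_i+I_n)Ω_{in}² are first integrals for i = 1,...,n-1. -/

import Mathlib

/-- For the multidimensional Klebsh–Tisserand system
`(I_i+I_n) Ω̇_{in} = (B_i − B_n) Γ_i Γ_n`, `Γ̇_i = −Γ_n Ω_{in}`, `Γ̇_n = Σ Γ_i Ω_{in}`,
the functions `F_i = (B_i − B_n) Γ_i² + (I_i+I_n) Ω_{in}²` are first integrals. -/
theorem klebsh_tisserand_first_integrals (n : ℕ)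
    (I : Fin n → ℝ) (In : ℝ) (hI : ∀ i, 0 < I i) (hIn : 0 < In)
    (B : Fin n → ℝ) (Bn : ℝ)
    (Ω : Fin n → ℝ → ℝ) (Γ : Fin n → ℝ → ℝ) (Γn : ℝ → ℝ)
    (hΩ : ∀ i t, HasDerivAt (Ω i) ((B i - Bn) * Γ i t * Γn t / (I i + In)) t)
    (hΓ : ∀ i t, HasDerivAt (Γ i) (-(Γn t * Ω i t)) t)
    (hΓn : ∀ t, HasDerivAt Γn (∑ i, Γ i t * Ω i t) t) :
    ∀ i t, (B i - Bn) * (Γ i t) ^ 2 + (I i + In) * (Ω i t) ^ 2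
         = (B i - Bn) * (Γ i 0) ^ 2 + (I i + In) * (Ω i 0) ^ 2 := by
  intro i t
  have hne : I i + In ≠ 0 := by have := hI i; linarith
  have key : ∀ s : ℝ, HasDerivAt
      (fun u => (B i - Bn) * (Γ i u) ^ 2 + (I i + In) * (Ω i u) ^ 2) 0 s := by
    intro s
    have h1 := ((hΓ i s).pow 2).const_mul (B i - Bn)
    have h2 := ((hΩ i s).pow 2).const_mul (I i + In)
    have := h1.add h2
    convert this using 1
    rotate_left 3
    field_simp
    ring
    all_goals rfl
  exact is_const_of_deriv_eq_zero (fun s => (key s).differentiableAt)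
    (fun s => (key s).deriv) t 0
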